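/- Under condition (P) (L_{I,𝒱} = L_𝒱 for all I ∈ Σ^{(n)}), let X be an equivalence class of the (v,m)-equivalence relation on Σ^{(n)} (where I ∼ I' iff I_{(m)} = I'_{(m)}). For any x = Σ_i a_i x_i ∈ H_T²(Δ) (a_i ∈ ℤ), the value ⟨ι_I*(x), v⟩ mod m is independent of the choice of I ∈ X, where ι_I*(x) = Σ_{i∈I} a_i u_i^I. -/

import Mathlib

open scoped Classical

/-- Under condition (P) (encoded by working inside the common lattice `L = L_𝒱`, of
which `{v i}_{i∈I}` is a basis for each `I ∈ Σ^{(n)}`, with dual basis `uI I i`;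
`hcomplete` encodes completeness of the multi-fan), if `I` and `I'` are
`(vgen,m)`-equivalent, i.e. have the same mod `m` face
`I_{(m)} = {i ∈ I : m ∤ ⟨u_i^I, vgen⟩}`, then for any
`x = Σ_i a_i x_i ∈ H_T²(Δ)` the value `⟨ι_I^*(x), vgen⟩ = Σ_{i∈I} a_i ⟨u_i^I, vgen⟩`
mod `m` is the same for `I` and `I'`. -/
theorem restriction_modm_constant_on_class
    {L : Type*} [AddCommGroup L]
    {ι : Type*} [Fintype ι]
    (n : ℕ) (v : ι → L) (Sn : Finset (Finset ι)) (hSn : Sn.Nonempty)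
    (hcard : ∀ I ∈ Sn, I.card = n)
    (wt : Finset ι → ℤ)
    (uI : Finset ι → ι → (L →ₗ[ℤ] ℤ))
    (hdual : ∀ I ∈ Sn, ∀ i ∈ I, ∀ j ∈ I, uI I i (v j) = if i = j then 1 else 0)
    (hbasis : ∀ I ∈ Sn, ∀ x : L, x = ∑ i ∈ I, uI I i x • v i)
    (hcomplete : ∀ K : Finset ι, (∃ I ∈ Sn, K ⊆ I) →
      ∃ d : ℤ, ∀ vg : L,
        (∀ I ∈ Sn, K ⊆ I → ∀ i ∈ I \ K, uI I i vg ≠ 0) →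
        ∑ I ∈ Sn.filter (fun I => K ⊆ I ∧ ∀ i ∈ I \ K, 0 < uI I i vg), wt I = d)
    (m : ℤ) (hm : 1 ≤ m)
    (vgen : L) (hgen : ∀ I ∈ Sn, ∀ i ∈ I, uI I i vgen ≠ 0)
    (I I' : Finset ι) (hI : I ∈ Sn) (hI' : I' ∈ Sn)
    (hface : I.filter (fun i => ¬ m ∣ uI I i vgen) =
      I'.filter (fun i => ¬ m ∣ uI I' i vgen))
    (a : ι → ℤ) :
    Int.ModEq m (∑ i ∈ I, a i * uI I i vgen) (∑ i ∈ I', a i * uI I' i vgen) := by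
  classical
  set K := I.filter (fun i => ¬ m ∣ uI I i vgen) with hK
  -- Key: coefficients agree mod m on K
  have key : ∀ i ∈ K, m ∣ (uI I' i vgen - uI I i vgen) := by
    intro i hiK
    have hiI : i ∈ I := (Finset.mem_filter.1 hiK).1
    have hiI' : i ∈ I' := (Finset.mem_filter.1 (hface ▸ hiK)).1
    -- expand vgen in basis I'
    have hexp := hbasis I' hI' vgen
    have happ : uI I i vgen = ∑ j ∈ I', uI I' j vgen * uI I i (v j) := by
      conv_lhs => rw [hexp]
      rw [map_sum]
      refine Finset.sum_congr rfl fun j hj => ?_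
      rw [map_zsmul, smul_eq_mul]
    -- split I' into the filter and its complement
    have hsplit := Finset.sum_filter_add_sum_filter_not I'
      (fun j => ¬ m ∣ uI I' j vgen) (fun j => uI I' j vgen * uI I i (v j))
    rw [← hface] at hsplit
    -- on K, uI I i (v j) = δ_{ij}
    have hKsum : ∑ j ∈ K, uI I' j vgen * uI I i (v j) = uI I' i vgen := by
      rw [Finset.sum_eq_single i]
      · rw [hdual I hI i hiI i hiI, if_pos rfl, mul_one]
      · intro j hj hji
        have hjI : j ∈ I := (Finset.mem_filter.1 hj).1
        rw [hdual I hI i hiI j hjI, if_neg (fun h => hji h.symm), mul_zero]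
      · intro h; exact absurd hiK h
    have hdvd : m ∣ ∑ j ∈ I'.filter (fun j => ¬¬ m ∣ uI I' j vgen),
        uI I' j vgen * uI I i (v j) := by
      refine Finset.dvd_sum fun j hj => ?_
      have := (Finset.mem_filter.1 hj).2
      exact Dvd.dvd.mul_right (not_not.1 this) _
    obtain ⟨c, hc⟩ := hdvd
    refine ⟨-c, ?_⟩
    have : uI I i vgen = uI I' i vgen + m * c := by
      rw [happ, ← hsplit, hKsum, hc]
    rw [this]; ring
  -- Now split both sums at K
  have h1 := Finset.sum_filter_add_sum_filter_not I
    (fun i => ¬ m ∣ uI I i vgen) (fun i => a i * uI I i vgen)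
  have h2 := Finset.sum_filter_add_sum_filter_not I'
    (fun i => ¬ m ∣ uI I' i vgen) (fun i => a i * uI I' i vgen)
  rw [← hface] at h2
  have d1 : m ∣ ∑ i ∈ I.filter (fun i => ¬¬ m ∣ uI I i vgen), a i * uI I i vgen :=
    Finset.dvd_sum fun i hi =>
      Dvd.dvd.mul_left (not_not.1 (Finset.mem_filter.1 hi).2) _
  have d2 : m ∣ ∑ i ∈ I'.filter (fun i => ¬¬ m ∣ uI I' i vgen), a i * uI I' i vgen :=
    Finset.dvd_sum fun i hi =>
      Dvd.dvd.mul_left (not_not.1 (Finset.mem_filter.1 hi).2) _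
  have dK : m ∣ (∑ i ∈ K, a i * uI I' i vgen) - (∑ i ∈ K, a i * uI I i vgen) := by
    rw [← Finset.sum_sub_distrib]
    refine Finset.dvd_sum fun i hi => ?_
    obtain ⟨c, hc⟩ := key i hi
    exact ⟨a i * c, by rw [← mul_sub, hc]; ring⟩
  rw [hK] at dK h2
  refine Int.modEq_iff_dvd.mpr ?_
  rw [← h2]
  rw [← h1]
  have h3 := dvd_sub (dvd_add dK d2) d1
  convert h3 using 1
  congr 1 <;> simp; ring
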